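/- Let X ∈ C²(𝕊¹; ℝ²) with |X|_* = inf_{s≠s'} |X(s)-X(s')|/|s-s'| > 0. Define A_i(s,s') = (Xᵢ(s) - Xᵢ(s'))/|X(s) - X(s')|. Then there is an absolute constant C such that |∂ₛ A_i(s,s')| ≤ C ‖X‖_{C²} / |X|_* for all s ≠ s'. -/

import Mathlib

open Real
open scoped RealInnerProductSpace

noncomputable section

abbrev E2 := EuclideanSpace ℝ (Fin 2)

/-- The chord-arc constant `|X|_*`. -/
noncomputable def starNorm (X : ℝ → E2) : ℝ :=
  sInf {r : ℝ | ∃ s s' : ℝ, ((s : AddCircle (2 * π)) ≠ (s' : AddCircle (2 * π))) ∧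
    r = ‖X s - X s'‖ / dist (s : AddCircle (2 * π)) (s' : AddCircle (2 * π))}

/-- The `C²` norm `‖X‖_{C²} = sup_s (|X| + |∂ₛX| + |∂ₛ²X|)`. -/
noncomputable def C2norm (X : ℝ → E2) : ℝ :=
  ⨆ s : ℝ, (‖X s‖ + ‖deriv X s‖ + ‖iteratedDeriv 2 X s‖)

/-- coordinates are bounded by the norm -/
lemma coord_abs_le (w : E2) (j : Fin 2) : |w j| ≤ ‖w‖ := by
  have h := abs_real_inner_le_norm (EuclideanSpace.single j (1:ℝ)) w
  simpa [EuclideanSpace.inner_single_left, EuclideanSpace.norm_single] using h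

lemma abs_sub_le_of_mem_uIcc {s s'' t : ℝ} (ht : t ∈ Set.uIcc s s'') : |t - s| ≤ |s - s''| := by
  rw [Set.uIcc_eq_union] at ht
  rcases ht with h | h <;> rw [Set.mem_Icc] at h <;>
    rw [abs_sub_le_iff] <;> constructor <;> cases abs_cases (s - s'') <;> linarith [h.1, h.2]

/-- pointwise bound by the C² norm -/
lemma le_C2norm (X : ℝ → E2) (hper : Function.Periodic X (2 * π)) (hX : ContDiff ℝ 2 X) (t : ℝ) :
    ‖X t‖ + ‖deriv X t‖ + ‖iteratedDeriv 2 X t‖ ≤ C2norm X := by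
  set h : ℝ → ℝ := fun t => ‖X t‖ + ‖deriv X t‖ + ‖iteratedDeriv 2 X t‖ with hh
  have hXshift : (fun x => X (x + 2*π)) = X := funext fun x => hper x
  have hdper : ∀ u, deriv X (u + 2*π) = deriv X u := fun u => by
    rw [← deriv_comp_add_const, hXshift]
  have hd2per : ∀ u, iteratedDeriv 2 X (u + 2*π) = iteratedDeriv 2 X u := fun u => by
    have := congrFun (iteratedDeriv_comp_add_const 2 X (2*π)) u
    rw [hXshift] at this
    exact this.symm
  have hhper : Function.Periodic h (2*π) := fun u => by
    simp only [hh, hper u, hdper u, hd2per u]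
  have hcont : Continuous h :=
    ((hX.continuous.norm.add ((hX.continuous_deriv (by norm_num)).norm)).add
      ((hX.continuous_iteratedDeriv 2 (by exact_mod_cast le_refl _)).norm))
  have hbdd : BddAbove (Set.range h) := by
    have hc : BddAbove (h '' Set.Icc 0 (2*π)) :=
      (isCompact_Icc.image_of_continuousOn hcont.continuousOn).bddAbove
    refine hc.mono ?_
    rintro y ⟨u, rfl⟩
    obtain ⟨z, hz, hy⟩ := hhper.exists_mem_Ico₀ (by positivity) u
    exact ⟨z, ⟨hz.1, hz.2.le⟩, hy.symm⟩
  exact le_ciSup hbdd t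

/-- the chord-arc lower bound -/
lemma starNorm_mul_dist_le (X : ℝ → E2) (a b : ℝ)
    (hab : ((a : AddCircle (2 * π)) ≠ (b : AddCircle (2 * π)))) :
    starNorm X * dist (a : AddCircle (2 * π)) (b : AddCircle (2 * π)) ≤ ‖X a - X b‖ := by
  have hd : 0 < dist (a : AddCircle (2 * π)) (b : AddCircle (2 * π)) := dist_pos.2 hab
  have hmem : ‖X a - X b‖ / dist (a : AddCircle (2 * π)) (b : AddCircle (2 * π)) ∈
      {r : ℝ | ∃ s s' : ℝ, ((s : AddCircle (2 * π)) ≠ (s' : AddCircle (2 * π))) ∧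
        r = ‖X s - X s'‖ / dist (s : AddCircle (2 * π)) (s' : AddCircle (2 * π))} :=
    ⟨a, b, hab, rfl⟩
  have hle : starNorm X ≤ ‖X a - X b‖ / dist (a : AddCircle (2 * π)) (b : AddCircle (2 * π)) :=
    csInf_le ⟨0, fun r ⟨u, u', huu, hr⟩ => hr ▸ div_nonneg (norm_nonneg _) dist_nonneg⟩ hmem
  calc starNorm X * dist (a : AddCircle (2*π)) (b : AddCircle (2*π))
      ≤ (‖X a - X b‖ / dist (a : AddCircle (2*π)) (b : AddCircle (2*π))) *
          dist (a : AddCircle (2*π)) (b : AddCircle (2*π)) :=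
        mul_le_mul_of_nonneg_right hle hd.le
    _ = ‖X a - X b‖ := div_mul_cancel₀ _ hd.ne'

/-- mean value bound for the first derivative -/
lemma deriv_lipschitz (X : ℝ → E2) (hX : ContDiff ℝ 2 X) (M : ℝ)
    (hM : ∀ t, ‖iteratedDeriv 2 X t‖ ≤ M) (a b : ℝ) :
    ‖deriv X a - deriv X b‖ ≤ M * |a - b| := by
  have h2 : ContDiff ℝ ((1 : WithTop ℕ∞) + 1) X := by
    rw [show ((1 : WithTop ℕ∞) + 1) = 2 by norm_num]; exact hX
  have hdd : Differentiable ℝ (deriv X) :=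
    ((contDiff_succ_iff_deriv.mp h2).2.2).differentiable one_ne_zero
  have := Convex.norm_image_sub_le_of_norm_hasDerivWithin_le
    (f := deriv X) (f' := fun t => deriv (deriv X) t) (s := Set.univ)
    (fun x _ => (hdd x).hasDerivAt.hasDerivWithinAt)
    (fun x _ => by
      show ‖deriv (deriv X) x‖ ≤ M
      rw [show deriv (deriv X) x = iteratedDeriv 2 X x by
        rw [iteratedDeriv_succ, iteratedDeriv_one]]
      exact hM x)
    convex_univ (Set.mem_univ b) (Set.mem_univ a)
  simpa [Real.norm_eq_abs] using this

set_option maxHeartbeats 1000000 in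
/-- uniform bound `|∂ₛ A_i(s,s')| ≤ C ‖X‖_{C²} / |X|_*` for the normalized
chord direction `A_i(s,s') = (Xᵢ(s) - Xᵢ(s'))/|X(s) - X(s')|`, with `C` an absolute constant. -/
theorem stmt2 : ∃ C : ℝ, 0 < C ∧
    ∀ X : ℝ → E2, Function.Periodic X (2 * π) → ContDiff ℝ 2 X → 0 < starNorm X →
      ∀ s s' : ℝ, (s : AddCircle (2 * π)) ≠ (s' : AddCircle (2 * π)) → ∀ i : Fin 2,
        |deriv (fun t : ℝ => (X t i - X s' i) / ‖X t - X s'‖) s|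
          ≤ C * C2norm X / starNorm X := by
  refine ⟨2, by norm_num, ?_⟩
  intro X hper hX hstar s s' hne i
  haveI : Fact (0 < 2*π) := ⟨by positivity⟩
  have hM2 : ∀ t, ‖iteratedDeriv 2 X t‖ ≤ C2norm X := fun t => by
    have := le_C2norm X hper hX t
    have h1 := norm_nonneg (X t); have h2 := norm_nonneg (deriv X t); linarith
  have hM0 : 0 ≤ C2norm X := by
    have := le_C2norm X hper hX 0
    have h1 := norm_nonneg (X 0); have h2 := norm_nonneg (deriv X 0)
    have h3 := norm_nonneg (iteratedDeriv 2 X 0); linarith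
  have hchord0 := starNorm_mul_dist_le X s s' hne
  set M := C2norm X with hMdef
  set d := dist (s : AddCircle (2*π)) (s' : AddCircle (2*π)) with hd
  have hdpos : 0 < d := dist_pos.2 hne
  have hdeq : d = |(s - s') - round ((2*π)⁻¹ * (s - s')) * (2*π)| := by
    rw [hd, dist_eq_norm, ← QuotientAddGroup.mk_sub, AddCircle.norm_eq]
  set k : ℤ := round ((2*π)⁻¹ * (s - s')) with hk
  set s'' : ℝ := s' + k * (2*π) with hs''
  have hXs'' : X s'' = X s' := by rw [hs'']; exact (hper.int_mul k) s'
  set δ := s - s'' with hδdef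
  have hδd : |δ| = d := by rw [hdeq, hδdef, hs'']; congr 1; push_cast; ring
  have hδ0 : δ ≠ 0 := by
    intro h
    rw [h, abs_zero] at hδd
    exact hdpos.ne hδd
  set c := X s' with hc
  set Δ := X s - c with hΔ
  set r := ‖Δ‖ with hrdef
  have hr : starNorm X * d ≤ r := hchord0
  have hrpos : 0 < r := lt_of_lt_of_le (by positivity) hr
  have hΔne : Δ ≠ 0 := by
    intro h
    rw [hrdef, h, norm_zero] at hrpos
    exact lt_irrefl 0 hrpos
  set v := deriv X s with hv
  have hXd : HasDerivAt X v s := (hX.differentiable two_ne_zero s).hasDerivAt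
  have hfi : HasDerivAt (fun t => X t i - c i) (v i) s :=
    ((EuclideanSpace.proj (𝕜 := ℝ) i).hasFDerivAt.comp_hasDerivAt s hXd).sub_const _
  have hg : HasDerivAt (fun t => ‖X t - c‖) ((⟪Δ, v⟫ + ⟪v, Δ⟫) / (2 * r)) s := by
    have hi := HasDerivAt.inner ℝ (hXd.sub_const c) (hXd.sub_const c)
    have hs0 : ⟪X s - c, X s - c⟫ ≠ 0 := fun hh => hΔne (inner_self_eq_zero.mp hh)
    have hsq := hi.sqrt hs0
    have heq : (fun t => ‖X t - c‖) = fun t => √⟪X t - c, X t - c⟫ :=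
      funext fun t => norm_eq_sqrt_real_inner _
    rw [heq]
    convert hsq using 1
    rw [← hΔ, show √⟪Δ, Δ⟫ = r by rw [hrdef, norm_eq_sqrt_real_inner]]
  set D := ((v i) * r - (X s i - c i) * ((⟪Δ, v⟫ + ⟪v, Δ⟫) / (2 * r))) / r^2 with hD
  have hA : HasDerivAt (fun t : ℝ => (X t i - c i) / ‖X t - c‖) D s := by
    have := hfi.div hg (by rw [← hΔ, ← hrdef]; exact hrpos.ne')
    exact this
  have hderiv_eq : deriv (fun t : ℝ => (X t i - c i) / ‖X t - c‖) s = D := hA.deriv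
  rw [hderiv_eq]
  -- algebra: cancellation via the Taylor remainder R
  set R := Δ - δ • v with hR
  have hΔR : Δ = δ • v + R := by rw [hR]; abel
  have hRi : R i = Δ i - δ * v i := rfl
  have hvi : v i = (Δ i - R i) / δ := by rw [hRi]; field_simp; ring
  have hip : ⟪Δ, v⟫ = (r^2 - ⟪Δ, R⟫) / δ := by
    have h1 : ⟪Δ, Δ⟫ = δ * ⟪Δ, v⟫ + ⟪Δ, R⟫ := by
      calc ⟪Δ, Δ⟫ = ⟪Δ, δ • v + R⟫ := by rw [← hΔR]
        _ = δ * ⟪Δ, v⟫ + ⟪Δ, R⟫ := by rw [inner_add_right, real_inner_smul_right]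
    have h2 : ⟪Δ, Δ⟫ = r^2 := real_inner_self_eq_norm_sq Δ
    rw [eq_div_iff hδ0]
    linarith
  have hΔieq : X s i - c i = Δ i := rfl
  have hip2 : ⟪v, Δ⟫ = (r^2 - ⟪Δ, R⟫) / δ := by rw [real_inner_comm]; exact hip
  have key : D = (Δ i * ⟪Δ, R⟫ - R i * r^2) / (δ * r^3) := by
    rw [hD, hΔieq, hvi, hip, hip2]
    field_simp
    ring
  -- Taylor bound on R
  have hG : ∀ t : ℝ, HasDerivAt (fun u : ℝ => X u - u • v) (deriv X t - v) t := fun t => by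
    have h1 := (hX.differentiable two_ne_zero t).hasDerivAt
    have h2 : HasDerivAt (fun u : ℝ => u • v) v t := by
      simpa using (hasDerivAt_id t).smul_const v
    exact h1.sub h2
  have hρ : ‖R‖ ≤ M * |δ|^2 := by
    have hmv := Convex.norm_image_sub_le_of_norm_hasDerivWithin_le
      (f := fun u : ℝ => X u - u • v) (f' := fun t => deriv X t - v) (s := Set.uIcc s s'')
      (fun x _ => (hG x).hasDerivWithinAt)
      (fun x hx => by
        show ‖deriv X x - v‖ ≤ M * |s - s''|
        calc ‖deriv X x - v‖ ≤ M * |x - s| := by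
              rw [hv]; exact deriv_lipschitz X hX M hM2 x s
          _ ≤ M * |s - s''| := mul_le_mul_of_nonneg_left (abs_sub_le_of_mem_uIcc hx) hM0)
      (convex_uIcc s s'') (Set.right_mem_uIcc) (Set.left_mem_uIcc)
    have hGR : (X s - s • v) - (X s'' - s'' • v) = R := by
      rw [hR, hΔ, ← hXs'', hδdef, sub_smul]
      abel
    calc ‖R‖ = ‖(X s - s • v) - (X s'' - s'' • v)‖ := by rw [hGR]
      _ ≤ (M * |s - s''|) * ‖s - s''‖ := hmv
      _ = M * |δ|^2 := by rw [Real.norm_eq_abs, ← hδdef]; ring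
  -- numerator bound
  have hnum : |Δ i * ⟪Δ, R⟫ - R i * r^2| ≤ 2 * (M * |δ|^2) * r^2 := by
    have h1 : |Δ i| ≤ r := coord_abs_le Δ i
    have h2 : |R i| ≤ ‖R‖ := coord_abs_le R i
    have h3 : |⟪Δ, R⟫| ≤ r * ‖R‖ := abs_real_inner_le_norm Δ R
    have h4 : 0 ≤ ‖R‖ := norm_nonneg R
    calc |Δ i * ⟪Δ, R⟫ - R i * r^2| ≤ |Δ i * ⟪Δ, R⟫| + |R i * r^2| := abs_sub _ _
      _ = |Δ i| * |⟪Δ, R⟫| + |R i| * r^2 := by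
          rw [abs_mul, abs_mul, abs_of_pos (by positivity : (0:ℝ) < r^2)]
      _ ≤ r * (r * ‖R‖) + ‖R‖ * r^2 := by
          have ha : |Δ i| * |⟪Δ, R⟫| ≤ r * (r * ‖R‖) :=
            mul_le_mul h1 h3 (abs_nonneg _) hrpos.le
          have hb : |R i| * r^2 ≤ ‖R‖ * r^2 :=
            mul_le_mul_of_nonneg_right h2 (by positivity)
          linarith
      _ = 2 * ‖R‖ * r^2 := by ring
      _ ≤ 2 * (M * |δ|^2) * r^2 := by
          have h5 := mul_le_mul_of_nonneg_left hρ (by norm_num : (0:ℝ) ≤ 2)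
          exact mul_le_mul_of_nonneg_right h5 (by positivity)
  -- final combination
  rw [key, abs_div, abs_mul, abs_of_pos (by positivity : (0:ℝ) < r^3),
    div_le_div_iff₀ (by positivity) hstar]
  have hchord : starNorm X * |δ| ≤ r := by rw [hδd]; exact hr
  have hδabs : 0 < |δ| := abs_pos.mpr hδ0
  calc |Δ i * ⟪Δ, R⟫ - R i * r^2| * starNorm X
      ≤ (2 * (M * |δ|^2) * r^2) * starNorm X :=
        mul_le_mul_of_nonneg_right hnum hstar.le
    _ = (2 * M * |δ| * r^2) * (starNorm X * |δ|) := by ring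
    _ ≤ (2 * M * |δ| * r^2) * r := by
        refine mul_le_mul_of_nonneg_left hchord ?_
        have : 0 ≤ 2 * M * |δ| := by positivity
        positivity
    _ = 2 * M * (|δ| * r^3) := by ring

end
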